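/- Suppose I* = lim_{t→∞} I(t) exists (as a finite limit, with the improper Riemann integral ∫₀^∞ c(t)A(t) dt converging). Then the function ψ⁰(T) = (I* − I(T))·A(T)⁻¹ equals ψ⁰(T) = (∫_T^∞ c(t)A(t) dt)·A(T)⁻¹, and ψ⁰ solves the adjoint system ψ̇ = −ψ·B − c with λ = 1. -/

import Mathlib

open Matrix MeasureTheory intervalIntegral Filter

section AuxPi

theorem hasDerivAt_pi' {ι : Type*} [Fintype ι] {E : ι → Type*}
    [∀ i, NormedAddCommGroup (E i)] [∀ i, NormedSpace ℝ (E i)]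
    {f : ℝ → ∀ i, E i} {f' : ∀ i, E i} {x : ℝ} :
    HasDerivAt f f' x ↔ ∀ i, HasDerivAt (fun t => f t i) (f' i) x := by
  exact hasDerivAt_pi

end AuxPi

section AuxLebesgue

open Metric in
lemma ae_hasDerivAt_intervalIntegral {E : Type*} [NormedAddCommGroup E] [NormedSpace ℝ E]
    [CompleteSpace E]
    {f : ℝ → E} (hf : ∀ S T : ℝ, IntervalIntegrable f volume S T) :
    ∀ᵐ x : ℝ, HasDerivAt (fun T => ∫ t in (0:ℝ)..T, f t) (f x) x := by
  have hloc : LocallyIntegrable f volume := by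
    intro x
    exact ⟨Set.Ioc (x-1) (x+1),
      Ioc_mem_nhds (by linarith) (by linarith), (hf (x-1) (x+1)).1⟩
  filter_upwards [IsUnifLocDoublingMeasure.ae_tendsto_average_norm_sub (μ := volume) hloc 1]
    with x hx
  have havg : Tendsto (fun t : ℝ => ⨍ y in closedBall x |t - x|, ‖f y - f x‖)
      (nhdsWithin x {x}ᶜ) (nhds 0) := by
    refine hx (fun _ => x) (fun t => |t - x|) ?_ ?_
    · rw [tendsto_nhdsWithin_iff]
      constructor
      · have h0 : Tendsto (fun t : ℝ => |t - x|) (nhds x) (nhds 0) := by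
          have h1 : Continuous (fun t : ℝ => |t - x|) :=
            (continuous_id.sub continuous_const).abs
          simpa using h1.tendsto x
        exact h0.mono_left nhdsWithin_le_nhds
      · filter_upwards [self_mem_nhdsWithin] with t ht
        exact abs_pos.2 (sub_ne_zero.2 ht)
    · filter_upwards with t
      simp [abs_nonneg]
  rw [hasDerivAt_iff_tendsto_slope]
  rw [tendsto_iff_norm_sub_tendsto_zero]
  have key : ∀ᶠ t in nhdsWithin x {x}ᶜ,
      ‖slope (fun T => ∫ t in (0:ℝ)..T, f t) x t - f x‖ ≤
        2 * ⨍ y in closedBall x |t - x|, ‖f y - f x‖ := by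
    filter_upwards [self_mem_nhdsWithin] with t ht
    have htx : t ≠ x := ht
    have hr : (0:ℝ) < |t - x| := abs_pos.2 (sub_ne_zero.2 htx)
    have hFt : (∫ s in (0:ℝ)..t, f s) - ∫ s in (0:ℝ)..x, f s = ∫ s in x..t, f s :=
      integral_interval_sub_left (hf 0 t) (hf 0 x)
    have hsub : (∫ s in x..t, f s) - (t - x) • f x = ∫ s in x..t, (f s - f x) := by
      rw [intervalIntegral.integral_sub (hf x t) (intervalIntegrable_const),
        intervalIntegral.integral_const]
    have hslope : slope (fun T => ∫ t in (0:ℝ)..T, f t) x t - f x =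
        (t - x)⁻¹ • ∫ s in x..t, (f s - f x) := by
      rw [slope_def_module, hFt, ← hsub, smul_sub, smul_smul,
        inv_mul_cancel₀ (sub_ne_zero.2 htx), one_smul]
    rw [hslope]
    have hint : IntegrableOn (fun y => ‖f y - f x‖) (closedBall x |t - x|) volume := by
      rw [Real.closedBall_eq_Icc]
      have : IntervalIntegrable (fun y => f y - f x) volume (x - |t - x|) (x + |t - x|) :=
        (hf _ _).sub intervalIntegrable_const
      exact ((intervalIntegrable_iff_integrableOn_Icc_of_le (by linarith)).1 this).norm
    have hss : Set.uIoc x t ⊆ closedBall x |t - x| := by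
      rw [Real.closedBall_eq_Icc]
      intro y hy
      rcases le_or_gt x t with h | h
      · rw [Set.uIoc_of_le h] at hy
        constructor
        · have := hy.1; have := abs_nonneg (t - x); linarith [neg_abs_le (t - x)]
        · have : y ≤ t := hy.2
          have habs : t - x ≤ |t - x| := le_abs_self _
          linarith
      · rw [Set.uIoc_of_ge h.le] at hy
        constructor
        · have habs : x - t ≤ |t - x| := by rw [abs_sub_comm]; exact le_abs_self _
          have := hy.1; linarith
        · have := hy.2; have := abs_nonneg (t - x); linarith
    have h1 : ‖∫ s in x..t, (f s - f x)‖ ≤ ∫ y in closedBall x |t - x|, ‖f y - f x‖ := by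
      refine (intervalIntegral.norm_integral_le_integral_norm_uIoc).trans ?_
      exact setIntegral_mono_set hint
        (Filter.Eventually.of_forall fun y => norm_nonneg _)
        (Filter.Eventually.of_forall hss)
    have h2 : ∫ y in closedBall x |t - x|, ‖f y - f x‖ =
        (2 * |t - x|) * ⨍ y in closedBall x |t - x|, ‖f y - f x‖ := by
      rw [setAverage_eq, Real.volume_real_closedBall (by positivity)]
      rw [smul_eq_mul, ← mul_assoc, mul_inv_cancel₀ (by positivity), one_mul]
    rw [norm_smul, norm_inv, Real.norm_eq_abs]
    calc |t - x|⁻¹ * ‖∫ s in x..t, (f s - f x)‖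
        ≤ |t - x|⁻¹ * ((2 * |t - x|) * ⨍ y in closedBall x |t - x|, ‖f y - f x‖) := by
          rw [← h2]; exact mul_le_mul_of_nonneg_left h1 (by positivity)
      _ = 2 * ⨍ y in closedBall x |t - x|, ‖f y - f x‖ := by
          field_simp
  have h2 : Tendsto (fun t : ℝ => 2 * ⨍ y in closedBall x |t - x|, ‖f y - f x‖)
      (nhdsWithin x {x}ᶜ) (nhds 0) := by
    simpa using havg.const_mul 2
  exact squeeze_zero' (Filter.Eventually.of_forall fun t => norm_nonneg _) key h2

end AuxLebesgue

section LinftyAux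

open Asymptotics

attribute [local instance] Matrix.linftyOpNormedAddCommGroup Matrix.linftyOpNormedSpace
  Matrix.linftyOpNormedRing Matrix.linftyOpNormedAlgebra

variable {d : ℕ}

lemma matrix_norm_le_sum (M : Matrix (Fin d) (Fin d) ℝ) : ‖M‖ ≤ ∑ i, ∑ j, ‖M i j‖ := by
  rw [Matrix.linfty_opNorm_def]
  have : (Finset.univ.sup fun i => ∑ j, ‖M i j‖₊) ≤ ∑ i, ∑ j, ‖M i j‖₊ :=
    Finset.sup_le fun i _ =>
      Finset.single_le_sum (f := fun i => ∑ j, ‖M i j‖₊) (fun _ _ => zero_le)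
        (Finset.mem_univ i)
  calc ((Finset.univ.sup fun i => ∑ j, ‖M i j‖₊ : NNReal) : ℝ)
      ≤ ((∑ i, ∑ j, ‖M i j‖₊ : NNReal) : ℝ) := by exact_mod_cast this
    _ = ∑ i, ∑ j, ‖M i j‖ := by push_cast [coe_nnnorm]; rfl

lemma matrix_entry_le_norm (M : Matrix (Fin d) (Fin d) ℝ) (i j : Fin d) : ‖M i j‖ ≤ ‖M‖ := by
  rw [Matrix.linfty_opNorm_def]
  have h1 : ‖M i j‖₊ ≤ ∑ j, ‖M i j‖₊ :=
    Finset.single_le_sum (f := fun j => ‖M i j‖₊) (fun _ _ => zero_le) (Finset.mem_univ j)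
  have h2 := Finset.le_sup (f := fun i => ∑ j, ‖M i j‖₊) (Finset.mem_univ i)
  exact_mod_cast h1.trans h2

lemma matrix_hasDerivAt_of_entries {f : ℝ → Matrix (Fin d) (Fin d) ℝ}
    {f' : Matrix (Fin d) (Fin d) ℝ} {T : ℝ}
    (h : ∀ i j, HasDerivAt (fun t => f t i j) (f' i j) T) : HasDerivAt f f' T := by
  refine hasDerivAt_iff_isLittleO.2 ?_
  have hb : ∀ t, ‖f t - f T - (t - T) • f'‖ ≤
      ‖∑ i, ∑ j : Fin d, ‖f t i j - f T i j - (t - T) • f' i j‖‖ := by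
    intro t
    refine le_trans (matrix_norm_le_sum _) ?_
    rw [Real.norm_eq_abs, abs_of_nonneg (by positivity)]
    exact le_of_eq (by simp [Matrix.sub_apply, Matrix.smul_apply])
  refine (IsBigO.of_bound' (Eventually.of_forall hb)).trans_isLittleO ?_
  refine IsLittleO.fun_sum fun i _ => IsLittleO.fun_sum fun j _ => ?_
  exact ((hasDerivAt_iff_isLittleO.1 (h i j))).norm_left

lemma matrix_entries_of_hasDerivAt {f : ℝ → Matrix (Fin d) (Fin d) ℝ}
    {f' : Matrix (Fin d) (Fin d) ℝ} {T : ℝ} (h : HasDerivAt f f' T) (i j : Fin d) :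
    HasDerivAt (fun t => f t i j) (f' i j) T := by
  replace h := hasDerivAt_iff_isLittleO.1 h
  refine hasDerivAt_iff_isLittleO.2 ?_
  have hb : ∀ t, ‖f t i j - f T i j - (t - T) • f' i j‖ ≤ ‖‖f t - f T - (t - T) • f'‖‖ := by
    intro t
    rw [norm_norm]
    refine le_trans (le_of_eq ?_) (matrix_entry_le_norm _ i j)
    simp [Matrix.sub_apply, Matrix.smul_apply]
  exact (IsBigO.of_bound' (Eventually.of_forall hb)).trans_isLittleO h.norm_left

lemma aux_inv {A : ℝ → Matrix (Fin d) (Fin d) ℝ} {A' : Matrix (Fin d) (Fin d) ℝ} {T : ℝ}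
    (hA : ∀ i j, HasDerivAt (fun t => A t i j) (A' i j) T) (hu : IsUnit (A T)) :
    ∀ i j, HasDerivAt (fun t => (A t)⁻¹ i j) ((-((A T)⁻¹ * A' * (A T)⁻¹)) i j) T := by
  have hAd : HasDerivAt A A' T := matrix_hasDerivAt_of_entries hA
  obtain ⟨u, hu'⟩ := hu
  have key : HasDerivAt (fun t => Ring.inverse (A t))
      (-((A T)⁻¹ * A' * (A T)⁻¹)) T := by
    have hinv : HasFDerivAt (Ring.inverse : Matrix (Fin d) (Fin d) ℝ → _)
        (-(ContinuousLinearMap.mulLeftRight ℝ _ ↑u⁻¹) ↑u⁻¹) (A T) := by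
      rw [← hu']; exact hasFDerivAt_ringInverse u
    have h1 := hinv.comp_hasDerivAt T hAd.hasFDerivAt
    refine h1.congr_deriv ?_
    simp [ContinuousLinearMap.smulRight_apply, ← hu', ← Matrix.nonsing_inv_eq_ringInverse,
      Matrix.coe_units_inv, mul_assoc]
  have heq : (fun t => (A t)⁻¹) = fun t => Ring.inverse (A t) := by
    funext t; exact Matrix.nonsing_inv_eq_ringInverse _
  exact fun i j => matrix_entries_of_hasDerivAt (heq ▸ key) i j

end LinftyAux

attribute [local instance] Matrix.normedAddCommGroup Matrix.normedSpace

/-- The explicit (Aseev–Kryazhimskii type) formula for the adjoint variable: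
if `I* = lim_{T→∞} I(T)` exists, where `I(T) = ∫₀ᵀ c(t)A(t) dt` and `A` is the
fundamental matrix of `Ȧ = B(t)A`, `A(0) = 1`, then
`ψ⁰(T) = (I* − I(T))·A(T)⁻¹` equals `(∫_T^∞ c(t)A(t) dt)·A(T)⁻¹` (the improper
Riemann integral `∫_T^∞` converging to `I* − I(T)`), and `ψ⁰` solves the
adjoint system `ψ̇ = −ψ·B − c` with `λ = 1` (a.e. on `[0,∞)`). -/
theorem stmt11 (d : ℕ) (B A : ℝ → Matrix (Fin d) (Fin d) ℝ)
    (c : ℝ → (Fin d → ℝ))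
    (hA0 : A 0 = 1) (hAinv : ∀ t : ℝ, 0 ≤ t → IsUnit (A t))
    (hA : ∀ t : ℝ, 0 ≤ t → HasDerivAt A (B t * A t) t)
    (hc_loc : ∀ S T : ℝ, IntervalIntegrable (fun t => c t ᵥ* A t) volume S T)
    (Istar : Fin d → ℝ)
    (hIstar : Tendsto (fun T : ℝ => ∫ t in (0:ℝ)..T, c t ᵥ* A t)
      atTop (nhds Istar)) :
    (∀ T : ℝ, 0 ≤ T →
      Tendsto (fun S : ℝ => ∫ t in T..S, c t ᵥ* A t) atTop
        (nhds (Istar - ∫ t in (0:ℝ)..T, c t ᵥ* A t))) ∧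
    (∀ᵐ T ∂(volume.restrict (Set.Ici (0:ℝ))),
      HasDerivAt (fun T : ℝ => (Istar - ∫ t in (0:ℝ)..T, c t ᵥ* A t) ᵥ* (A T)⁻¹)
        (-(((Istar - ∫ t in (0:ℝ)..T, c t ᵥ* A t) ᵥ* (A T)⁻¹) ᵥ* B T) - c T)
        T) := by
  constructor
  · intro T hT
    have heq : (fun S : ℝ => ∫ t in T..S, c t ᵥ* A t) =
        fun S : ℝ => (∫ t in (0:ℝ)..S, c t ᵥ* A t) - ∫ t in (0:ℝ)..T, c t ᵥ* A t := by
      funext S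
      exact (integral_interval_sub_left (hc_loc 0 S) (hc_loc 0 T)).symm
    rw [heq]
    exact hIstar.sub_const _
  · filter_upwards [ae_restrict_of_ae (ae_hasDerivAt_intervalIntegral hc_loc),
      ae_restrict_mem measurableSet_Ici] with T hF hT
    -- notation
    set v : ℝ → (Fin d → ℝ) := fun t => Istar - ∫ s in (0:ℝ)..t, c s ᵥ* A s with hv_def
    have hv : HasDerivAt v (-(c T ᵥ* A T)) T := by
      have h := (hasDerivAt_const T Istar).sub hF
      rw [zero_sub] at h
      exact h
    have hAe : ∀ i j, HasDerivAt (fun t => A t i j) ((B T * A T) i j) T := by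
      intro i j
      exact hasDerivAt_pi'.1 (hasDerivAt_pi'.1 (hA T hT) i) j
    have hNe := aux_inv hAe (hAinv T hT)
    have hvi : ∀ i, HasDerivAt (fun t => v t i) ((-(c T ᵥ* A T)) i) T :=
      fun i => hasDerivAt_pi'.1 hv i
    -- the matrix derivative of the inverse simplifies
    have hAN : A T * (A T)⁻¹ = 1 :=
      Matrix.mul_nonsing_inv _ ((Matrix.isUnit_iff_isUnit_det _).1 (hAinv T hT))
    have hN'eq : -((A T)⁻¹ * (B T * A T) * (A T)⁻¹) = -((A T)⁻¹ * B T) := by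
      rw [← mul_assoc, mul_assoc ((A T)⁻¹ * B T), hAN, mul_one]
    have hkey : ∀ j : Fin d,
        (∑ i, ((-(c T ᵥ* A T)) i * (A T)⁻¹ i j
          + v T i * (-((A T)⁻¹ * (B T * A T) * (A T)⁻¹)) i j)) =
        (-((v T ᵥ* (A T)⁻¹) ᵥ* B T) - c T) j := by
      intro j
      rw [Finset.sum_add_distrib]
      have e1 : (∑ i, (-(c T ᵥ* A T)) i * (A T)⁻¹ i j) = ((-(c T ᵥ* A T)) ᵥ* (A T)⁻¹) j := by
        simp [Matrix.vecMul, dotProduct]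
      have e2 : (∑ i, v T i * (-((A T)⁻¹ * (B T * A T) * (A T)⁻¹)) i j) =
          (v T ᵥ* (-((A T)⁻¹ * (B T * A T) * (A T)⁻¹))) j := by
        simp [Matrix.vecMul, dotProduct]
      rw [e1, e2, hN'eq]
      have e3 : (-(c T ᵥ* A T)) ᵥ* (A T)⁻¹ = -(c T) := by
        rw [Matrix.neg_vecMul, Matrix.vecMul_vecMul, hAN, Matrix.vecMul_one]
      have e4 : v T ᵥ* (-((A T)⁻¹ * B T)) = -((v T ᵥ* (A T)⁻¹) ᵥ* B T) := by
        rw [Matrix.vecMul_neg, ← Matrix.vecMul_vecMul]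
      rw [e3, e4]
      simp [Pi.add_apply, Pi.neg_apply, Pi.sub_apply]
      ring
    refine hasDerivAt_pi'.2 fun j => ?_
    have hsum : HasDerivAt
        (fun t => ∑ i, v t i * (A t)⁻¹ i j)
        (∑ i, ((-(c T ᵥ* A T)) i * (A T)⁻¹ i j
          + v T i * (-((A T)⁻¹ * (B T * A T) * (A T)⁻¹)) i j)) T := by
      refine HasDerivAt.fun_sum fun i _ => ?_
      exact (hvi i).mul (hNe i j)
    rw [hkey j] at hsum
    exact hsum
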